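/- Let α ∈ ℂ⟦x,y,p⟧ be a formal power series such that the constant term of ∂α/∂x is 0 (so that 1 + ∂α/∂x + p·∂α/∂y is a unit of ℂ⟦x,y,p⟧). Let β₀ ∈ ℂ⟦x,y,p⟧ with ∂β₀/∂p = 0. Then there exists one and only one β ∈ ℂ⟦x,y,p⟧ satisfying the first-order equation (1 + ∂α/∂x + p·∂α/∂y)·∂β/∂p − p·(∂α/∂p)·(∂β/∂y) − (∂α/∂p)·(∂β/∂x) = p·∂α/∂p together with the initial condition β − β₀ ∈ (p), the ideal generated by p. -/

import Mathlib

/-- The formal partial derivative `∂/∂x_i` on a multivariate formal power series ring. -/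
noncomputable def mvDeriv {σ R : Type*} [CommRing R] (i : σ)
    (f : MvPowerSeries σ R) : MvPowerSeries σ R :=
  fun α => (α i + 1 : ℕ) • MvPowerSeries.coeff (α + Finsupp.single i 1) f

namespace ContactCauchy

/-- `ℂ⟦x,y,p⟧`, with `x, y, p` the variables indexed by `0, 1, 2 : Fin 3`. -/
abbrev A := MvPowerSeries (Fin 3) ℂ

noncomputable abbrev dx (f : A) : A := mvDeriv (0 : Fin 3) f
noncomputable abbrev dy (f : A) : A := mvDeriv (1 : Fin 3) f
noncomputable abbrev dp (f : A) : A := mvDeriv (2 : Fin 3) f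
noncomputable abbrev p : A := MvPowerSeries.X (2 : Fin 3)

lemma coeff_mvDeriv (i : Fin 3) (f : A) (m : Fin 3 →₀ ℕ) :
    MvPowerSeries.coeff m (mvDeriv i f) =
      ((m i + 1 : ℕ) : ℂ) * MvPowerSeries.coeff (m + Finsupp.single i 1) f := by
  rw [MvPowerSeries.coeff_apply]
  show ((m i + 1 : ℕ) • MvPowerSeries.coeff (m + Finsupp.single i 1) f) = _
  rw [nsmul_eq_mul]

lemma mvDeriv_sub (i : Fin 3) (f g : A) :
    mvDeriv i (f - g) = mvDeriv i f - mvDeriv i g := by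
  apply MvPowerSeries.ext; intro m
  rw [map_sub, coeff_mvDeriv, coeff_mvDeriv, coeff_mvDeriv, map_sub, mul_sub]

lemma mvDeriv_add (i : Fin 3) (f g : A) :
    mvDeriv i (f + g) = mvDeriv i f + mvDeriv i g := by
  apply MvPowerSeries.ext; intro m
  rw [map_add, coeff_mvDeriv, coeff_mvDeriv, coeff_mvDeriv, map_add, mul_add]

lemma pdvd_iff {n : ℕ} {f : A} :
    p ^ n ∣ f ↔ ∀ m : Fin 3 →₀ ℕ, m 2 < n → MvPowerSeries.coeff m f = 0 :=
  MvPowerSeries.X_pow_dvd_iff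

lemma dvd_mvDeriv_ne {n : ℕ} {f : A} (i : Fin 3) (hi : i ≠ 2) (h : p ^ n ∣ f) :
    p ^ n ∣ mvDeriv i f := by
  rw [pdvd_iff] at h ⊢
  intro m hm
  rw [coeff_mvDeriv, h, mul_zero]
  rwa [Finsupp.add_apply, Finsupp.single_apply, if_neg hi, add_zero]

/-- formal antiderivative in `p`, with zero constant term in `p`. -/
noncomputable def pInt (f : A) : A :=
  fun m => if m 2 = 0 then 0 else ((m 2 : ℕ) : ℂ)⁻¹ *
    MvPowerSeries.coeff (m - Finsupp.single 2 1) f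

lemma coeff_pInt (f : A) (m : Fin 3 →₀ ℕ) :
    MvPowerSeries.coeff m (pInt f) = if m 2 = 0 then 0 else ((m 2 : ℕ) : ℂ)⁻¹ *
      MvPowerSeries.coeff (m - Finsupp.single 2 1) f := by
  rw [MvPowerSeries.coeff_apply]; rfl

lemma dp_pInt (f : A) : mvDeriv (2 : Fin 3) (pInt f) = f := by
  apply MvPowerSeries.ext; intro m
  rw [coeff_mvDeriv, coeff_pInt]
  have h1 : (m + Finsupp.single 2 1 : Fin 3 →₀ ℕ) 2 = m 2 + 1 := by
    rw [Finsupp.add_apply, Finsupp.single_eq_same]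
  have h2 : m + Finsupp.single 2 1 - Finsupp.single 2 1 = m := add_tsub_cancel_right _ _
  rw [h1, h2, if_neg (Nat.succ_ne_zero _), ← mul_assoc,
    mul_inv_cancel₀ (by exact_mod_cast Nat.succ_ne_zero (m 2)), one_mul]

lemma pInt_sub (f g : A) : pInt (f - g) = pInt f - pInt g := by
  apply MvPowerSeries.ext; intro m
  rw [map_sub, coeff_pInt, coeff_pInt, coeff_pInt, map_sub]
  split_ifs with h
  · rw [sub_zero]
  · rw [mul_sub]

lemma pInt_dvd {n : ℕ} {f : A} (h : p ^ n ∣ f) : p ^ (n + 1) ∣ pInt f := by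
  rw [pdvd_iff] at h ⊢
  intro m hm
  rw [coeff_pInt]
  split_ifs with h0
  · rfl
  · rw [h, mul_zero]
    rw [Finsupp.tsub_apply, Finsupp.single_eq_same]
    omega

lemma p_dvd_pInt (f : A) : p ∣ pInt f := by
  simpa using pInt_dvd (n := 0) (one_dvd f)

/-- The integral operator whose fixed points are the solutions. -/
noncomputable def Phi (α β₀ V β : A) : A :=
  β₀ + pInt (V * (mvDeriv 2 α * (p * mvDeriv 1 β + mvDeriv 0 β) + p * mvDeriv 2 α))

lemma Phi_contract (α β₀ V : A) {n : ℕ} {β β' : A} (h : p ^ n ∣ β - β') :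
    p ^ (n + 1) ∣ Phi α β₀ V β - Phi α β₀ V β' := by
  have hd0 : p ^ n ∣ mvDeriv 0 β - mvDeriv 0 β' := by
    rw [← mvDeriv_sub]; exact dvd_mvDeriv_ne 0 (by decide) h
  have hd1 : p ^ n ∣ mvDeriv 1 β - mvDeriv 1 β' := by
    rw [← mvDeriv_sub]; exact dvd_mvDeriv_ne 1 (by decide) h
  have e1 : Phi α β₀ V β - Phi α β₀ V β' =
      pInt (V * (mvDeriv 2 α * (p * (mvDeriv 1 β - mvDeriv 1 β')
        + (mvDeriv 0 β - mvDeriv 0 β')))) := by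
    unfold Phi
    rw [add_sub_add_left_eq_sub, ← pInt_sub]
    ring_nf
  rw [e1]
  exact pInt_dvd (((dvd_add (hd1.mul_left p) hd0).mul_left (mvDeriv 2 α)).mul_left V)

/-- Iterates of the integral operator. -/
noncomputable def csol (α β₀ V : A) (n : ℕ) : A := (Phi α β₀ V)^[n] β₀

lemma csol_succ (α β₀ V : A) (n : ℕ) :
    csol α β₀ V (n + 1) = Phi α β₀ V (csol α β₀ V n) :=
  Function.iterate_succ_apply' _ _ _

lemma csol_step (α β₀ V : A) (n : ℕ) :
    p ^ n ∣ csol α β₀ V (n + 1) - csol α β₀ V n := by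
  induction n with
  | zero => exact one_dvd _
  | succ n ih =>
      have ih' : p ^ n ∣ Phi α β₀ V (csol α β₀ V n) - csol α β₀ V n := by
        rw [← csol_succ]; exact ih
      rw [csol_succ α β₀ V (n + 1), csol_succ α β₀ V n]
      exact Phi_contract α β₀ V ih'

lemma csol_stab (α β₀ V : A) :
    ∀ n (m : Fin 3 →₀ ℕ), m 2 < n →
      MvPowerSeries.coeff m (csol α β₀ V n)
        = MvPowerSeries.coeff m (csol α β₀ V (m 2 + 1)) := by
  intro n
  induction n with
  | zero => intro m hm; omega
  | succ n ih =>
      intro m hm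
      rcases lt_or_eq_of_le (Nat.lt_succ_iff.mp hm) with h | h
      · rw [← ih m h]
        have hd := pdvd_iff.mp (csol_step α β₀ V n) m h
        rw [map_sub] at hd
        linear_combination hd
      · rw [h]

/-- The solution: the coefficientwise limit of the iterates. -/
noncomputable def βsol (α β₀ V : A) : A :=
  fun m => MvPowerSeries.coeff m (csol α β₀ V (m 2 + 1))

lemma coeff_βsol (α β₀ V : A) (m : Fin 3 →₀ ℕ) :
    MvPowerSeries.coeff m (βsol α β₀ V)
      = MvPowerSeries.coeff m (csol α β₀ V (m 2 + 1)) := by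
  rw [MvPowerSeries.coeff_apply]; rfl

lemma βsol_dvd (α β₀ V : A) (n : ℕ) : p ^ n ∣ βsol α β₀ V - csol α β₀ V n := by
  rw [pdvd_iff]
  intro m hm
  rw [map_sub, coeff_βsol, csol_stab α β₀ V n m hm, sub_self]

lemma βsol_fix (α β₀ V : A) : Phi α β₀ V (βsol α β₀ V) = βsol α β₀ V := by
  apply MvPowerSeries.ext; intro m
  have h1 := pdvd_iff.mp (Phi_contract α β₀ V (βsol_dvd α β₀ V (m 2))) m (Nat.lt_succ_self _)
  rw [map_sub] at h1
  rw [coeff_βsol, csol_succ α β₀ V (m 2)]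
  linear_combination h1

theorem contact_cauchy_problem_existence_uniqueness
    (α β₀ : A)
    (hα : MvPowerSeries.coeff (0 : Fin 3 →₀ ℕ) (dx α) = 0)
    (hβ₀ : dp β₀ = 0) :
    ∃! β : A,
      (1 + dx α + p * dy α) * dp β - p * dp α * dy β - dp α * dx β = p * dp α ∧
      β - β₀ ∈ Ideal.span {p} := by
  have hα' : MvPowerSeries.coeff (0 : Fin 3 →₀ ℕ) (mvDeriv (0 : Fin 3) α) = 0 := hα
  have hβ₀' : mvDeriv (2 : Fin 3) β₀ = 0 := hβ₀
  show ∃! β : A,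
      (1 + mvDeriv 0 α + p * mvDeriv 1 α) * mvDeriv 2 β
        - p * mvDeriv 2 α * mvDeriv 1 β - mvDeriv 2 α * mvDeriv 0 β = p * mvDeriv 2 α ∧
      β - β₀ ∈ Ideal.span {p}
  set U : A := 1 + mvDeriv 0 α + p * mvDeriv 1 α with hU
  have hUc : MvPowerSeries.constantCoeff U = ((1 : ℂˣ) : ℂ) := by
    rw [hU, map_add, map_add, map_one, map_mul, MvPowerSeries.constantCoeff_X, zero_mul,
      ← MvPowerSeries.coeff_zero_eq_constantCoeff_apply, hα', add_zero, add_zero, Units.val_one]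
  set V : A := MvPowerSeries.invOfUnit U 1 with hV
  have hUV : U * V = 1 := MvPowerSeries.mul_invOfUnit U 1 hUc
  have hg : βsol α β₀ V = β₀ + pInt (V * (mvDeriv 2 α *
      (p * mvDeriv 1 (βsol α β₀ V) + mvDeriv 0 (βsol α β₀ V)) + p * mvDeriv 2 α)) := by
    conv_lhs => rw [← βsol_fix α β₀ V]
    rfl
  have hdpβ : mvDeriv 2 (βsol α β₀ V) = V * (mvDeriv 2 α *
      (p * mvDeriv 1 (βsol α β₀ V) + mvDeriv 0 (βsol α β₀ V)) + p * mvDeriv 2 α) := by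
    conv_lhs => rw [hg]
    rw [mvDeriv_add, hβ₀', dp_pInt, zero_add]
  have hsub : βsol α β₀ V - β₀ = pInt (V * (mvDeriv 2 α *
      (p * mvDeriv 1 (βsol α β₀ V) + mvDeriv 0 (βsol α β₀ V)) + p * mvDeriv 2 α)) := by
    conv_lhs => rw [hg]
    rw [add_sub_cancel_left]
  have heq : U * mvDeriv 2 (βsol α β₀ V) - p * mvDeriv 2 α * mvDeriv 1 (βsol α β₀ V)
      - mvDeriv 2 α * mvDeriv 0 (βsol α β₀ V) = p * mvDeriv 2 α := by
    rw [hdpβ, ← mul_assoc, hUV, one_mul]; ring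
  refine ⟨βsol α β₀ V, ⟨heq, ?_⟩, ?_⟩
  · rw [hsub, Ideal.mem_span_singleton]
    exact p_dvd_pInt _
  · rintro β' ⟨heq', hmem'⟩
    have hδp : p ∣ β' - βsol α β₀ V := by
      have h1 : p ∣ β' - β₀ := Ideal.mem_span_singleton.mp hmem'
      have h2 : p ∣ βsol α β₀ V - β₀ := by
        rw [hsub]; exact p_dvd_pInt _
      have h3 : β' - βsol α β₀ V = (β' - β₀) - (βsol α β₀ V - β₀) := by ring
      rw [h3]; exact dvd_sub h1 h2
    have hkey : U * mvDeriv 2 (β' - βsol α β₀ V) =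
        p * mvDeriv 2 α * mvDeriv 1 (β' - βsol α β₀ V)
          + mvDeriv 2 α * mvDeriv 0 (β' - βsol α β₀ V) := by
      rw [mvDeriv_sub 2, mvDeriv_sub 1, mvDeriv_sub 0]
      linear_combination heq' - heq
    have hind : ∀ n, p ^ n ∣ β' - βsol α β₀ V := by
      intro n
      induction n with
      | zero => exact one_dvd _
      | succ n ih =>
          have h0 : p ^ n ∣ mvDeriv 0 (β' - βsol α β₀ V) := dvd_mvDeriv_ne 0 (by decide) ih
          have h1 : p ^ n ∣ mvDeriv 1 (β' - βsol α β₀ V) := dvd_mvDeriv_ne 1 (by decide) ih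
          have hrhs : p ^ n ∣ U * mvDeriv 2 (β' - βsol α β₀ V) := by
            rw [hkey]
            exact dvd_add (h1.mul_left (p * mvDeriv 2 α)) (h0.mul_left (mvDeriv 2 α))
          have hdpδ : p ^ n ∣ mvDeriv 2 (β' - βsol α β₀ V) := by
            have h4 : mvDeriv 2 (β' - βsol α β₀ V)
                = V * (U * mvDeriv 2 (β' - βsol α β₀ V)) := by
              rw [← mul_assoc, mul_comm V U, hUV, one_mul]
            rw [h4]
            exact hrhs.mul_left V
          rw [pdvd_iff]
          intro m hm
          rcases Nat.eq_zero_or_pos (m 2) with h2 | h2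
          · exact pdvd_iff.mp (by simpa using hδp : p ^ 1 ∣ β' - βsol α β₀ V) m (by omega)
          · have hle : Finsupp.single (2 : Fin 3) 1 ≤ m := Finsupp.single_le_iff.mpr h2
            have hsub2 : (m - Finsupp.single 2 1 : Fin 3 →₀ ℕ) 2 = m 2 - 1 := by
              rw [Finsupp.tsub_apply, Finsupp.single_eq_same]
            have hz := pdvd_iff.mp hdpδ (m - Finsupp.single 2 1) (by omega)
            rw [coeff_mvDeriv, tsub_add_cancel_of_le hle] at hz
            rcases mul_eq_zero.mp hz with h3 | h3
            · exact absurd h3 (Nat.cast_ne_zero.mpr (Nat.succ_ne_zero _))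
            · exact h3
    have hzero : β' - βsol α β₀ V = 0 := by
      apply MvPowerSeries.ext; intro m
      rw [map_zero]
      exact pdvd_iff.mp (hind (m 2 + 1)) m (Nat.lt_succ_self _)
    exact sub_eq_zero.mp hzero

end ContactCauchy
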